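/- Rays in directions f_i with i < ℓ leave the left bounding cone on the left: Let Δ ≥ 4 be an integer, u ∈ ℝ², and let i, ℓ be integers with 1 ≤ i ≤ Δ−2, 0 ≤ ℓ ≤ Δ−1 and i < ℓ. Then for every real α > 0 the point u + α·f_i does not belong to LBR(u, ℓ); moreover, every point of LBR(u, ℓ) other than u lies strictly to the right of the ray from u in direction f_i. -/
import Mathlib


open Set

/-- The vector `f i = (−1/2 + (i−1)/(Δ−3), 1)`. -/
noncomputable def f (Δ i : ℕ) : ℝ × ℝ :=
  (-(1 / 2) + ((i : ℝ) - 1) / ((Δ : ℝ) - 3), 1)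

/-- The cross product `cross(d, w) = d_x·w_y − d_y·w_x`. -/
def cross (d w : ℝ × ℝ) : ℝ := d.1 * w.2 - d.2 * w.1

/-- The left bounding cone `LBR(v, ℓ)`. -/
def LBR (Δ : ℕ) (v : ℝ × ℝ) (ℓ : ℕ) : Set (ℝ × ℝ) :=
  insert v {p | v.2 ≤ p.2 ∧
    (ℓ = 1 → cross (f Δ 1) (p - v) ≤ 0) ∧
    (Δ = 4 ∧ ℓ = 2 → v.1 < p.1) ∧
    (5 ≤ Δ ∧ 2 ≤ ℓ ∧ ℓ ≤ Δ - 2 →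
      cross (f Δ ℓ + (1 / ((Δ : ℝ) - 4)) • f Δ 1) (p - v) < 0) ∧
    (ℓ = Δ - 1 → cross (f Δ (Δ - 2)) (p - v) < 0)}

/-- The right bounding cone `RBR(v, r)`. -/
def RBR (Δ : ℕ) (v : ℝ × ℝ) (r : ℕ) : Set (ℝ × ℝ) :=
  insert v {p | v.2 ≤ p.2 ∧
    (r = 0 → 0 < cross (f Δ 1) (p - v)) ∧
    (Δ = 4 ∧ r = 1 → p.1 < v.1) ∧
    (5 ≤ Δ ∧ 1 ≤ r ∧ r ≤ Δ - 3 →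
      0 < cross (f Δ r + (1 / ((Δ : ℝ) - 4)) • f Δ (Δ - 2)) (p - v)) ∧
    (r = Δ - 2 → 0 ≤ cross (f Δ (Δ - 2)) (p - v))}

/-- The bounding region `BR(uv, ℓ, r) = LBR(u, ℓ) ∩ RBR(v, r)`. -/
def BR (Δ : ℕ) (u v : ℝ × ℝ) (ℓ r : ℕ) : Set (ℝ × ℝ) :=
  LBR Δ u ℓ ∩ RBR Δ v r

/-- The truncated bounding region `BRU(uv, ℓ, r, h)`. -/
def BRU (Δ : ℕ) (u v : ℝ × ℝ) (ℓ r : ℕ) (h : ℝ) : Set (ℝ × ℝ) :=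
  BR Δ u v ℓ r ∩ {p | p.2 < u.2 + h}

/-- Rays in directions f i with i < ℓ leave the left bounding cone on the left. -/
theorem ray_leaves_LBR_left (Δ : ℕ) (hΔ : 4 ≤ Δ) (u : ℝ × ℝ) (i ℓ : ℕ)
    (hi1 : 1 ≤ i) (hi2 : i ≤ Δ - 2) (hℓ : ℓ ≤ Δ - 1) (hiℓ : i < ℓ) :
    (∀ α : ℝ, 0 < α → u + α • f Δ i ∉ LBR Δ u ℓ) ∧
    (∀ p ∈ LBR Δ u ℓ, p ≠ u → cross (f Δ i) (p - u) < 0) := by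
  have hD : (4:ℝ) ≤ (Δ:ℝ) := by exact_mod_cast hΔ
  have hiR : (1:ℝ) ≤ (i:ℝ) := by exact_mod_cast hi1
  have hiℓR : (i:ℝ) + 1 ≤ (ℓ:ℝ) := by exact_mod_cast hiℓ
  have hiD : (i:ℝ) + 2 ≤ (Δ:ℝ) := by exact_mod_cast (by omega : i + 2 ≤ Δ)
  have h3pos : (0:ℝ) < (Δ:ℝ) - 3 := by linarith
  have main : ∀ p ∈ LBR Δ u ℓ, p ≠ u → cross (f Δ i) (p - u) < 0 := by
    intro p hp hne
    rcases hp with hp | hp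
    · exact absurd hp hne
    obtain ⟨h1, h2, h3, h4, h5⟩ := hp
    have hw2 : (0:ℝ) ≤ p.2 - u.2 := by linarith
    by_cases hc : ℓ = Δ - 1
    · have h5' := h5 hc
      have hcast : ((Δ - 2 : ℕ) : ℝ) = (Δ:ℝ) - 2 := by
        rw [Nat.cast_sub (by omega : 2 ≤ Δ)]; norm_num
      simp only [cross, f, hcast, Prod.fst_sub, Prod.snd_sub] at h5' ⊢
      have key : ((i:ℝ) - 1) / ((Δ:ℝ) - 3) ≤ ((Δ:ℝ) - 2 - 1) / ((Δ:ℝ) - 3) := by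
        apply div_le_div_of_nonneg_right (by linarith) h3pos.le
      nlinarith [mul_le_mul_of_nonneg_right key hw2]
    · have hℓ2 : 2 ≤ ℓ := by omega
      have hℓD : ℓ ≤ Δ - 2 := by omega
      by_cases h4' : Δ = 4
      · have hℓeq : ℓ = 2 := by omega
        have hieq : i = 1 := by omega
        have h3' := h3 ⟨h4', hℓeq⟩
        subst h4' hieq
        simp only [cross, f, Prod.fst_sub, Prod.snd_sub]
        norm_num
        nlinarith
      · have hΔ5 : 5 ≤ Δ := by omega
        have hD5 : (5:ℝ) ≤ (Δ:ℝ) := by exact_mod_cast hΔ5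
        have h4pos : (0:ℝ) < (Δ:ℝ) - 4 := by linarith
        have hℓR : (ℓ:ℝ) + 2 ≤ (Δ:ℝ) := by exact_mod_cast (by omega : ℓ + 2 ≤ Δ)
        have hiD3 : (i:ℝ) + 3 ≤ (Δ:ℝ) := by exact_mod_cast (by omega : i + 3 ≤ Δ)
        have h4'' := h4 ⟨hΔ5, hℓ2, hℓD⟩
        simp only [cross, f, Prod.fst_sub, Prod.snd_sub, Prod.fst_add, Prod.snd_add,
          Prod.smul_fst, Prod.smul_snd, smul_eq_mul] at h4'' ⊢
        set D := (Δ:ℝ)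
        have hC1 : (0:ℝ) < 1 + 1 / (D - 4) := by positivity
        have key : (1 + 1 / (D - 4)) * (-(1/2) + ((i:ℝ) - 1) / (D - 3)) ≤
            (-(1/2) + ((ℓ:ℝ) - 1) / (D - 3)) + (1 / (D - 4)) * (-(1/2) + ((1:ℝ) - 1) / (D - 3)) := by
          rw [← sub_nonneg]
          have heq : ((-(1/2) + ((ℓ:ℝ) - 1) / (D - 3)) + (1 / (D - 4)) * (-(1/2) + ((1:ℝ) - 1) / (D - 3)))
              - (1 + 1 / (D - 4)) * (-(1/2) + ((i:ℝ) - 1) / (D - 3))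
              = (((ℓ:ℝ) - 1) * (D - 4) - ((i:ℝ) - 1) * (D - 3)) / ((D - 3) * (D - 4)) := by
            field_simp
            ring
          rw [heq]
          apply div_nonneg _ (by positivity)
          nlinarith
        nlinarith [mul_le_mul_of_nonneg_right key hw2]
  refine ⟨?_, main⟩
  intro α hα hmem
  have hne : u + α • f Δ i ≠ u := by
    intro h
    have h2' : (u + α • f Δ i).2 = u.2 := by rw [h]
    simp [f] at h2'
    linarith
  have := main _ hmem hne
  simp only [cross, f, add_sub_cancel_left, Prod.smul_fst, Prod.smul_snd, Prod.fst_sub,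
    Prod.snd_sub, smul_eq_mul] at this
  nlinarith
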